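/- Let H be a complex Hilbert space, (k_n)_{n≥1} nonzero vectors in H, 0 < λ_n < 2, and let P_n denote the orthogonal projection onto ℂk_n, P_n f = ⟨k_n, f⟩ k_n/‖k_n‖². Let (Ω, ℱ, ℙ) be a probability space and (ε_n)_{n≥1} an independent family of complex-valued random variables with ε_n ∈ L²(ℙ) and 𝔼[ε_n] = 0 for every n. Fix f* ∈ H, set y_n := ⟨k_n, f*⟩ + ε_n, define the H-valued random variables f_0 := 0 and f_n := f_{n−1} + λ_n (y_n − ⟨k_n, f_{n−1}⟩) k_n/‖k_n‖², and set e_n := f* − f_n. Then for every N ≥ 1, 𝔼‖e_N‖² = ‖f*‖² − ∑_{n=1}^N λ_n(2−λ_n) 𝔼‖P_n e_{n−1}‖² + ∑_{n=1}^N λ_n² 𝔼|ε_n|² / ‖k_n‖². -/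

import Mathlib

open MeasureTheory

section KZAux
open Complex


private lemma kz_re_swap (g εn : ℂ) : (g * (starRingEnd ℂ) εn).re = (εn * (starRingEnd ℂ) g).re := by
  rw [show g * (starRingEnd ℂ) εn = (starRingEnd ℂ) (εn * (starRingEnd ℂ) g) by
    rw [map_mul, Complex.conj_conj]; ring]
  exact Complex.conj_re _

private lemma kz_norm_sub_smul_sq {H : Type*} [NormedAddCommGroup H] [InnerProductSpace ℂ H]
    (x kn : H) (β : ℂ) :
    ‖x - β • kn‖ ^ 2
      = ‖x‖ ^ 2 - 2 * (β * (starRingEnd ℂ) (inner ℂ (kn) x : ℂ)).re + ‖β‖ ^ 2 * ‖kn‖ ^ 2 := by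
  rw [@norm_sub_sq ℂ, inner_smul_right, norm_smul, mul_pow]
  rw [← inner_conj_symm x kn]
  norm_num

private lemma kz_step_sq {H : Type*} [NormedAddCommGroup H] [InnerProductSpace ℂ H]
    (kn : H) (hk : kn ≠ 0) (l : ℝ) (εn : ℂ) (x : H) :
    ‖x - (((l : ℂ) * ((inner ℂ kn x : ℂ) + εn) / ((‖kn‖ : ℂ) ^ 2)) • kn)‖ ^ 2
      = ‖x‖ ^ 2 - l * (2 - l) * (‖(inner ℂ kn x : ℂ)‖ ^ 2 / ‖kn‖ ^ 2)
        + l ^ 2 * ‖εn‖ ^ 2 / ‖kn‖ ^ 2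
        + (2 * l * (l - 1) / ‖kn‖ ^ 2) * (εn * (starRingEnd ℂ) (inner ℂ kn x : ℂ)).re := by
  have hr : (0:ℝ) < ‖kn‖ := norm_pos_iff.2 hk
  set g : ℂ := inner ℂ kn x with hg
  set r : ℝ := ‖kn‖ ^ 2 with hrdef
  have hr0 : r ≠ 0 := by positivity
  have hβ : (l : ℂ) * (g + εn) / ((‖kn‖ : ℂ) ^ 2) = ((l / r : ℝ) : ℂ) * (g + εn) := by
    push_cast [hrdef]; ring
  rw [kz_norm_sub_smul_sq, hβ]
  have h1 : (((l / r : ℝ) : ℂ) * (g + εn) * (starRingEnd ℂ) g).re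
      = (l / r) * (‖g‖ ^ 2 + (εn * (starRingEnd ℂ) g).re) := by
    rw [mul_assoc, re_ofReal_mul, add_mul, Complex.add_re, Complex.mul_conj]
    rw [Complex.ofReal_re, Complex.normSq_eq_norm_sq]
  have h2 : ‖((l / r : ℝ) : ℂ) * (g + εn)‖ ^ 2
      = (l / r) ^ 2 * (‖g‖ ^ 2 + 2 * (εn * (starRingEnd ℂ) g).re + ‖εn‖ ^ 2) := by
    rw [norm_mul, mul_pow, Complex.norm_real, Real.norm_eq_abs, _root_.sq_abs]
    congr 1
    rw [Complex.sq_norm, Complex.normSq_add, kz_re_swap]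
    rw [Complex.sq_norm, Complex.sq_norm]
    ring
  rw [h1, h2]
  field_simp
  ring

noncomputable def kacF {H : Type*} [NormedAddCommGroup H] [InnerProductSpace ℂ H]
    (k : ℕ → H) (lam : ℕ → ℝ) (fstar : H) : ℕ → (ℕ → ℂ) → H
  | 0, _ => 0
  | n + 1, x => kacF k lam fstar n x
      + (((lam n : ℂ) * ((inner ℂ (k n) fstar : ℂ) + x n - inner ℂ (k n) (kacF k lam fstar n x))
          / ((‖k n‖ : ℂ) ^ 2)) • k n)

lemma kacF_congr {H : Type*} [NormedAddCommGroup H] [InnerProductSpace ℂ H]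
    (k : ℕ → H) (lam : ℕ → ℝ) (fstar : H) (n : ℕ) (x x' : ℕ → ℂ)
    (h : ∀ i < n, x i = x' i) : kacF k lam fstar n x = kacF k lam fstar n x' := by
  induction n with
  | zero => rfl
  | succ n ih =>
    have h' : ∀ i < n, x i = x' i := fun i hi => h i (Nat.lt_succ_of_lt hi)
    simp only [kacF, ih h', h n (Nat.lt_succ_self n)]

lemma kacF_inner_measurable {H : Type*} [NormedAddCommGroup H] [InnerProductSpace ℂ H]
    (k : ℕ → H) (lam : ℕ → ℝ) (fstar : H) (n : ℕ) (v : H) :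
    Measurable (fun x : ℕ → ℂ => (inner ℂ v (kacF k lam fstar n x) : ℂ)) := by
  induction n generalizing v with
  | zero => simp only [kacF, inner_zero_right]; exact measurable_const
  | succ n ih =>
    simp only [kacF, inner_add_right, inner_smul_right]
    exact (ih v).add
      (((((measurable_const.add (measurable_pi_apply n)).sub (ih (k n))).const_mul
        ((lam n : ℂ))).div_const _).mul_const _)
end KZAux

/-- **Expected energy balance under additive noise (Proposition 3.3).**
`k n` is the kernel section `k_{x_{n+1}}`, `P n` the orthogonal projection onto
`ℂ kₙ`, the noises `ε n` are independent, mean-zero and square-integrable, the data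
are `yₙ = ⟨kₙ, f*⟩ + εₙ`, `f` is the relaxed Kaczmarz recursion with `f 0 = 0`, and
`eₙ = f* - fₙ`.  Then `𝔼‖e_N‖² = ‖f*‖² - ∑_{n=1}^N λₙ(2-λₙ) 𝔼‖Pₙ e_{n-1}‖²
+ ∑_{n=1}^N λₙ² 𝔼|εₙ|² / ‖kₙ‖²`. -/
theorem noisy_kaczmarz_expected_energy_balance
    {H : Type*} [NormedAddCommGroup H] [InnerProductSpace ℂ H] [CompleteSpace H]
    {Ω : Type*} [MeasurableSpace Ω] (ℙ : Measure Ω) [IsProbabilityMeasure ℙ]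
    (k : ℕ → H) (hk : ∀ n, k n ≠ 0)
    (lam : ℕ → ℝ) (hlam0 : ∀ n, 0 < lam n) (hlam2 : ∀ n, lam n < 2)
    (ε : ℕ → Ω → ℂ) (hmeas : ∀ n, Measurable (ε n))
    (hL2 : ∀ n, MemLp (ε n) 2 ℙ)
    (hmean : ∀ n, ∫ ω, ε n ω ∂ℙ = 0)
    (hindep : ProbabilityTheory.iIndepFun ε ℙ)
    (fstar : H) (y : ℕ → Ω → ℂ) (hy : ∀ n ω, y n ω = inner ℂ (k n) fstar + ε n ω)
    (f : ℕ → Ω → H) (hf0 : ∀ ω, f 0 ω = 0)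
    (hfrec : ∀ n ω, f (n + 1) ω = f n ω
      + (((lam n : ℂ) * (y n ω - inner ℂ (k n) (f n ω)) / ((‖k n‖ : ℂ) ^ 2)) • k n))
    (e : ℕ → Ω → H) (he : ∀ n ω, e n ω = fstar - f n ω)
    (P : ℕ → H → H)
    (hP : ∀ n g, P n g = (((inner ℂ (k n) g : ℂ)) / ((‖k n‖ : ℂ) ^ 2)) • k n)
    (N : ℕ) (hN : 1 ≤ N) :
    ∫ ω, ‖e N ω‖ ^ 2 ∂ℙ
      = ‖fstar‖ ^ 2
        - (∑ n ∈ Finset.range N,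
            lam n * (2 - lam n) * ∫ ω, ‖P n (e n ω)‖ ^ 2 ∂ℙ)
        + ∑ n ∈ Finset.range N,
            (lam n) ^ 2 * (∫ ω, ‖ε n ω‖ ^ 2 ∂ℙ) / ‖k n‖ ^ 2 := by
  classical
  have hkN : ∀ n, (0:ℝ) < ‖k n‖ := fun n => norm_pos_iff.2 (hk n)
  -- agreement with the abstract recursion
  have hfk : ∀ n ω, f n ω = kacF k lam fstar n (fun i => ε i ω) := by
    intro n
    induction n with
    | zero => intro ω; simp [hf0, kacF]
    | succ n ih =>
      intro ω
      rw [hfrec n ω, hy n ω, ih ω]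
      rfl
  -- strong measurability
  have hfSM : ∀ n, StronglyMeasurable (f n) := by
    intro n
    induction n with
    | zero =>
      have hzz : f 0 = fun _ => (0:H) := funext hf0
      rw [hzz]; exact stronglyMeasurable_const
    | succ n ih =>
      have hrw : f (n+1) = fun ω => f n ω
          + (((lam n : ℂ) * (y n ω - inner ℂ (k n) (f n ω)) / ((‖k n‖ : ℂ) ^ 2)) • k n) :=
        funext (hfrec n)
      rw [hrw]
      have hin : Measurable fun ω => (inner ℂ (k n) (f n ω) : ℂ) :=
        ((innerSL ℂ (k n)).continuous.comp_stronglyMeasurable ih).measurable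
      have hyM : Measurable (y n) := by
        have : y n = fun ω => (inner ℂ (k n) fstar : ℂ) + ε n ω := funext (hy n)
        rw [this]; exact measurable_const.add (hmeas n)
      exact ih.add
        (((((hyM.sub hin).const_mul ((lam n : ℂ))).div_const _).stronglyMeasurable).smul_const (k n))
  have heSM : ∀ n, StronglyMeasurable (e n) := by
    intro n
    have : e n = fun ω => fstar - f n ω := funext (he n)
    rw [this]; exact stronglyMeasurable_const.sub (hfSM n)
  -- MemLp
  have hfL2 : ∀ n, MemLp (f n) 2 ℙ := by
    intro n
    induction n with
    | zero =>
      have hzz : f 0 = fun _ => (0:H) := funext hf0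
      rw [hzz]; exact memLp_const 0
    | succ n ih =>
      have hrw : f (n+1) = fun ω => f n ω
          + (((lam n : ℂ) * (y n ω - inner ℂ (k n) (f n ω)) / ((‖k n‖ : ℂ) ^ 2)) • k n) :=
        funext (hfrec n)
      rw [hrw]
      refine ih.add ?_
      have hinL2 : MemLp (fun ω => (inner ℂ (k n) (f n ω) : ℂ)) 2 ℙ := ih.const_inner (k n)
      have hyL2 : MemLp (y n) 2 ℙ := by
        have : y n = fun ω => (inner ℂ (k n) fstar : ℂ) + ε n ω := funext (hy n)
        rw [this]
        have h1 := memLp_const (μ := ℙ) (p := 2) (inner ℂ (k n) fstar)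
        have h2 := h1.add (hL2 n)
        exact h2
      have hsc : MemLp (fun ω =>
          (lam n : ℂ) * (y n ω - inner ℂ (k n) (f n ω)) / ((‖k n‖ : ℂ) ^ 2)) 2 ℙ := by
        have h := (hyL2.sub hinL2).const_mul ((lam n : ℂ) / ((‖k n‖ : ℂ) ^ 2))
        simp only [Pi.sub_apply] at h
        have hform : (fun ω =>
            (lam n : ℂ) * (y n ω - inner ℂ (k n) (f n ω)) / ((‖k n‖ : ℂ) ^ 2))
            = fun ω => ((lam n : ℂ) / ((‖k n‖ : ℂ) ^ 2)) * (y n ω - inner ℂ (k n) (f n ω)) := by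
          funext ω; ring
        rw [hform]
        exact h
      refine MemLp.of_le_mul (c := ‖k n‖) hsc (hsc.aestronglyMeasurable.smul_const (k n)) ?_
      filter_upwards with ω
      rw [norm_smul]; exact le_of_eq (mul_comm _ _)
  have heL2 : ∀ n, MemLp (e n) 2 ℙ := by
    intro n
    have : e n = fun ω => fstar - f n ω := funext (he n)
    rw [this]; exact (memLp_const fstar).sub (hfL2 n)
  have hgL2 : ∀ n, MemLp (fun ω => (inner ℂ (k n) (e n ω) : ℂ)) 2 ℙ :=
    fun n => (heL2 n).const_inner (k n)
  -- integrability of the squares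
  have hIe : ∀ n, Integrable (fun ω => ‖e n ω‖ ^ 2) ℙ := fun n => (heL2 n).norm.integrable_sq
  have hIg : ∀ n, Integrable (fun ω => ‖(inner ℂ (k n) (e n ω) : ℂ)‖ ^ 2) ℙ :=
    fun n => (hgL2 n).norm.integrable_sq
  have hIeps : ∀ n, Integrable (fun ω => ‖ε n ω‖ ^ 2) ℙ := fun n => (hL2 n).norm.integrable_sq
  -- independence
  have hInd : ∀ n, ProbabilityTheory.IndepFun (fun ω => (inner ℂ (k n) (e n ω) : ℂ)) (ε n) ℙ := by
    intro n
    set S := Finset.range n with hS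
    have hdisj : Disjoint S ({n} : Finset ℕ) := by
      simp [hS, Finset.disjoint_singleton_right]
    have base := hindep.indepFun_finset S {n} hdisj hmeas
    set ext : ({ i // i ∈ S } → ℂ) → (ℕ → ℂ) :=
      fun v i => if h : i ∈ S then v ⟨i, h⟩ else 0 with hext_def
    have hext : Measurable ext := by
      apply measurable_pi_lambda
      intro i
      by_cases h : i ∈ S
      · simpa [hext_def, h] using (measurable_pi_apply (⟨i, h⟩ : { i // i ∈ S }))
      · simp only [hext_def, dif_neg h]; exact measurable_const
    set φ : ({ i // i ∈ S } → ℂ) → ℂ :=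
      fun v => (inner ℂ (k n) fstar : ℂ) - inner ℂ (k n) (kacF k lam fstar n (ext v)) with hφ_def
    have hφ : Measurable φ :=
      measurable_const.sub ((kacF_inner_measurable k lam fstar n (k n)).comp hext)
    set ψ : ({ i // i ∈ ({n} : Finset ℕ) } → ℂ) → ℂ :=
      fun v => v ⟨n, Finset.mem_singleton_self n⟩ with hψ_def
    have hψ : Measurable ψ := measurable_pi_apply _
    have h2 := base.comp hφ hψ
    have hfun1 : (fun ω => (inner ℂ (k n) (e n ω) : ℂ))
        = φ ∘ (fun ω (i : { i // i ∈ S }) => ε i ω) := by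
      funext ω
      have hagree : kacF k lam fstar n (ext (fun i : { i // i ∈ S } => ε i ω))
          = kacF k lam fstar n (fun i => ε i ω) := by
        apply kacF_congr
        intro i hi
        have hiS : i ∈ S := by simpa [hS] using Finset.mem_range.2 hi
        simp only [hext_def, dif_pos hiS]
      simp only [Function.comp, hφ_def]
      rw [hagree, ← hfk n ω, he, inner_sub_right]
    have hfun2 : ε n = ψ ∘ (fun ω (i : { i // i ∈ ({n} : Finset ℕ) }) => ε i ω) := rfl
    rw [hfun1, hfun2]
    exact h2
  -- integrability and vanishing of the cross term
  have hIX : ∀ n, Integrable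
      (fun ω => (ε n ω * (starRingEnd ℂ) (inner ℂ (k n) (e n ω))).re) ℙ := by
    intro n
    have hiε : Integrable (ε n) ℙ := (hL2 n).integrable one_le_two
    have hig : Integrable (fun ω => (inner ℂ (k n) (e n ω) : ℂ)) ℙ :=
      (hgL2 n).integrable one_le_two
    have hεre : Integrable (fun ω => (ε n ω).re) ℙ := hiε.re
    have hεim : Integrable (fun ω => (ε n ω).im) ℙ := hiε.im
    have hgre : Integrable (fun ω => ((inner ℂ (k n) (e n ω) : ℂ)).re) ℙ := hig.re
    have hgim : Integrable (fun ω => ((inner ℂ (k n) (e n ω) : ℂ)).im) ℙ := hig.im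
    have h1 : ProbabilityTheory.IndepFun (fun ω => (ε n ω).re) (fun ω => ((inner ℂ (k n) (e n ω) : ℂ)).re) ℙ :=
      (hInd n).symm.comp Complex.measurable_re Complex.measurable_re
    have h2 : ProbabilityTheory.IndepFun (fun ω => (ε n ω).im) (fun ω => ((inner ℂ (k n) (e n ω) : ℂ)).im) ℙ :=
      (hInd n).symm.comp Complex.measurable_im Complex.measurable_im
    have hi1 : Integrable (fun ω => (ε n ω).re * ((inner ℂ (k n) (e n ω) : ℂ)).re) ℙ := by
      exact h1.integrable_mul hεre hgre
    have hi2 : Integrable (fun ω => (ε n ω).im * ((inner ℂ (k n) (e n ω) : ℂ)).im) ℙ := by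
      exact h2.integrable_mul hεim hgim
    have hpt : (fun ω => (ε n ω * (starRingEnd ℂ) (inner ℂ (k n) (e n ω))).re)
        = fun ω => (ε n ω).re * ((inner ℂ (k n) (e n ω) : ℂ)).re
            + (ε n ω).im * ((inner ℂ (k n) (e n ω) : ℂ)).im := by
      funext ω
      generalize (inner ℂ (k n) (e n ω) : ℂ) = z
      simp [Complex.mul_re, Complex.conj_re, Complex.conj_im]
    rw [hpt]
    exact hi1.add hi2
  have hX0 : ∀ n, ∫ ω, (ε n ω * (starRingEnd ℂ) (inner ℂ (k n) (e n ω))).re ∂ℙ = 0 := by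
    intro n
    have hiε : Integrable (ε n) ℙ := (hL2 n).integrable one_le_two
    have hig : Integrable (fun ω => (inner ℂ (k n) (e n ω) : ℂ)) ℙ :=
      (hgL2 n).integrable one_le_two
    have h1 : ProbabilityTheory.IndepFun (fun ω => (ε n ω).re) (fun ω => ((inner ℂ (k n) (e n ω) : ℂ)).re) ℙ :=
      (hInd n).symm.comp Complex.measurable_re Complex.measurable_re
    have h2 : ProbabilityTheory.IndepFun (fun ω => (ε n ω).im) (fun ω => ((inner ℂ (k n) (e n ω) : ℂ)).im) ℙ :=
      (hInd n).symm.comp Complex.measurable_im Complex.measurable_im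
    have hεre0 : ∫ ω, (ε n ω).re ∂ℙ = 0 := by
      have := integral_re hiε
      simp only [RCLike.re_to_complex] at this
      rw [this, hmean n]; simp
    have hεim0 : ∫ ω, (ε n ω).im ∂ℙ = 0 := by
      have := integral_im hiε
      simp only [RCLike.im_to_complex] at this
      rw [this, hmean n]; simp
    have hpt : (fun ω => (ε n ω * (starRingEnd ℂ) (inner ℂ (k n) (e n ω))).re)
        = fun ω => (ε n ω).re * ((inner ℂ (k n) (e n ω) : ℂ)).re
            + (ε n ω).im * ((inner ℂ (k n) (e n ω) : ℂ)).im := by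
      funext ω
      generalize (inner ℂ (k n) (e n ω) : ℂ) = z
      simp [Complex.mul_re, Complex.conj_re, Complex.conj_im]
    have hi1 : Integrable (fun ω => (ε n ω).re * ((inner ℂ (k n) (e n ω) : ℂ)).re) ℙ := by
      exact h1.integrable_mul hiε.re hig.re
    have hi2 : Integrable (fun ω => (ε n ω).im * ((inner ℂ (k n) (e n ω) : ℂ)).im) ℙ := by
      exact h2.integrable_mul hiε.im hig.im
    rw [hpt, integral_add hi1 hi2]
    have e1 := h1.integral_fun_mul_eq_mul_integral hiε.re.aestronglyMeasurable hig.re.aestronglyMeasurable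
    have e2 := h2.integral_fun_mul_eq_mul_integral hiε.im.aestronglyMeasurable hig.im.aestronglyMeasurable
    rw [e1, e2, hεre0, hεim0]
    simp
  -- norm of the projection
  have hPnorm : ∀ n x, ‖P n x‖ ^ 2 = ‖(inner ℂ (k n) x : ℂ)‖ ^ 2 / ‖k n‖ ^ 2 := by
    intro n x
    rw [hP, norm_smul, norm_div]
    have hd : ‖((‖k n‖ : ℂ) ^ 2)‖ = ‖k n‖ ^ 2 := by
      rw [norm_pow, Complex.norm_real, Real.norm_eq_abs, _root_.abs_of_nonneg (norm_nonneg _)]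
    rw [hd]
    have hne : ‖k n‖ ≠ 0 := (hkN n).ne'
    field_simp
  have hIP : ∀ n, Integrable (fun ω => ‖P n (e n ω)‖ ^ 2) ℙ := by
    intro n
    have : (fun ω => ‖P n (e n ω)‖ ^ 2)
        = fun ω => ‖(inner ℂ (k n) (e n ω) : ℂ)‖ ^ 2 / ‖k n‖ ^ 2 :=
      funext fun ω => hPnorm n (e n ω)
    rw [this]
    exact (hIg n).div_const _
  -- the one-step energy balance
  have step : ∀ n, ∫ ω, ‖e (n+1) ω‖ ^ 2 ∂ℙ
      = ∫ ω, ‖e n ω‖ ^ 2 ∂ℙ - lam n * (2 - lam n) * ∫ ω, ‖P n (e n ω)‖ ^ 2 ∂ℙ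
        + (lam n) ^ 2 * (∫ ω, ‖ε n ω‖ ^ 2 ∂ℙ) / ‖k n‖ ^ 2 := by
    intro n
    have hpt : ∀ ω, ‖e (n+1) ω‖ ^ 2
        = ‖e n ω‖ ^ 2 - lam n * (2 - lam n) * ‖P n (e n ω)‖ ^ 2
          + (lam n) ^ 2 / ‖k n‖ ^ 2 * ‖ε n ω‖ ^ 2
          + (2 * lam n * (lam n - 1) / ‖k n‖ ^ 2)
            * (ε n ω * (starRingEnd ℂ) (inner ℂ (k n) (e n ω))).re := by
      intro ω
      have he1 : e (n+1) ω
          = e n ω - (((lam n : ℂ) * ((inner ℂ (k n) (e n ω) : ℂ) + ε n ω)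
              / ((‖k n‖ : ℂ) ^ 2)) • k n) := by
        have hg' : (inner ℂ (k n) (e n ω) : ℂ) = inner ℂ (k n) fstar - inner ℂ (k n) (f n ω) := by
          rw [he]; exact inner_sub_right _ _ _
        have hsc : (lam n : ℂ) * (y n ω - inner ℂ (k n) (f n ω)) / ((‖k n‖ : ℂ) ^ 2)
            = (lam n : ℂ) * ((inner ℂ (k n) (e n ω) : ℂ) + ε n ω) / ((‖k n‖ : ℂ) ^ 2) := by
          rw [hy n ω, hg']; ring
        rw [he, hfrec n ω, hsc, he n ω, sub_add_eq_sub_sub]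
      rw [he1, kz_step_sq (k n) (hk n) (lam n) (ε n ω) (e n ω), hPnorm n (e n ω)]
      ring
    have I1 := hIe n
    have I2 : Integrable (fun ω => lam n * (2 - lam n) * ‖P n (e n ω)‖ ^ 2) ℙ :=
      (hIP n).const_mul _
    have I3 : Integrable (fun ω => (lam n) ^ 2 / ‖k n‖ ^ 2 * ‖ε n ω‖ ^ 2) ℙ :=
      (hIeps n).const_mul _
    have I4 : Integrable (fun ω => (2 * lam n * (lam n - 1) / ‖k n‖ ^ 2)
        * (ε n ω * (starRingEnd ℂ) (inner ℂ (k n) (e n ω))).re) ℙ :=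
      (hIX n).const_mul _
    calc ∫ ω, ‖e (n+1) ω‖ ^ 2 ∂ℙ
        = ∫ ω, (‖e n ω‖ ^ 2 - lam n * (2 - lam n) * ‖P n (e n ω)‖ ^ 2
            + (lam n) ^ 2 / ‖k n‖ ^ 2 * ‖ε n ω‖ ^ 2
            + (2 * lam n * (lam n - 1) / ‖k n‖ ^ 2)
              * (ε n ω * (starRingEnd ℂ) (inner ℂ (k n) (e n ω))).re) ∂ℙ :=
          integral_congr_ae (ae_of_all ℙ hpt)
      _ = ∫ ω, ‖e n ω‖ ^ 2 ∂ℙ - lam n * (2 - lam n) * ∫ ω, ‖P n (e n ω)‖ ^ 2 ∂ℙ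
            + (lam n) ^ 2 * (∫ ω, ‖ε n ω‖ ^ 2 ∂ℙ) / ‖k n‖ ^ 2 := by
          have I12 : Integrable (fun ω => ‖e n ω‖ ^ 2
              - lam n * (2 - lam n) * ‖P n (e n ω)‖ ^ 2) ℙ := by exact I1.sub I2
          have I123 : Integrable (fun ω => ‖e n ω‖ ^ 2
              - lam n * (2 - lam n) * ‖P n (e n ω)‖ ^ 2
              + (lam n) ^ 2 / ‖k n‖ ^ 2 * ‖ε n ω‖ ^ 2) ℙ := by exact I12.add I3
          rw [integral_add I123 I4, integral_add I12 I3,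
            integral_sub I1 I2, integral_const_mul, integral_const_mul, integral_const_mul,
            hX0 n, mul_zero, add_zero]
          ring
  -- conclusion by induction
  have main : ∀ M, ∫ ω, ‖e M ω‖ ^ 2 ∂ℙ
      = ‖fstar‖ ^ 2
        - (∑ n ∈ Finset.range M, lam n * (2 - lam n) * ∫ ω, ‖P n (e n ω)‖ ^ 2 ∂ℙ)
        + ∑ n ∈ Finset.range M, (lam n) ^ 2 * (∫ ω, ‖ε n ω‖ ^ 2 ∂ℙ) / ‖k n‖ ^ 2 := by
    intro M
    induction M with
    | zero =>
      have hc : (fun ω => ‖e 0 ω‖ ^ 2) = fun _ => ‖fstar‖ ^ 2 := by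
        funext ω; rw [he, hf0, sub_zero]
      rw [hc]
      simp
    | succ M ih =>
      rw [step M, ih, Finset.sum_range_succ, Finset.sum_range_succ]
      ring
  exact main N
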